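/- (Theorem 1, Network Passivity Index.) Let L, R, W be real m×m matrices with L symmetric and positive semidefinite, W skew-symmetric (Wᵀ = −W), and let C be a real n×m matrix. Assume there exist real numbers r > 0 and c > 0 such that ⟪x, R ⬝ x⟫ ≥ r · ‖x‖² and ‖C ⬝ x‖² ≤ c · ‖x‖² for all x ∈ ℝ^m. Suppose i : ℝ → ℝ^m is continuously differentiable with i(0) = 0, v : ℝ → ℝ^n is continuous, and for every t the equation L ⬝ (deriv i t) = −R ⬝ (i t) + W ⬝ (i t) + Cᵀ ⬝ (v t) holds. Then for every t ≥ 0, ∫₀ᵗ ⟪C ⬝ (i τ), v τ⟫ dτ − (r/c) · ∫₀ᵗ ‖C ⬝ (i τ)‖² dτ ≥ 0; that is, the network with input v and output i_s = C ⬝ i satisfies the OFP inequality with passivity index r/c on every interval [0, t]. -/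

import Mathlib

open MeasureTheory RealInnerProductSpace Matrix

/-- Matrix–vector multiplication viewed as a map between Euclidean spaces. -/
noncomputable def mulVecE {k l : ℕ} (M : Matrix (Fin k) (Fin l) ℝ)
    (x : EuclideanSpace ℝ (Fin l)) : EuclideanSpace ℝ (Fin k) :=
  (EuclideanSpace.equiv (Fin k) ℝ).symm (M.mulVec (EuclideanSpace.equiv (Fin l) ℝ x))

lemma inner_mulVecE {k l : ℕ} (M : Matrix (Fin k) (Fin l) ℝ)
    (x : EuclideanSpace ℝ (Fin k)) (y : EuclideanSpace ℝ (Fin l)) :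
    ⟪x, mulVecE M y⟫ = ⟪mulVecE Mᵀ x, y⟫ := by
  have key : (EuclideanSpace.equiv (Fin k) ℝ x) ⬝ᵥ (M *ᵥ EuclideanSpace.equiv (Fin l) ℝ y)
      = (Mᵀ *ᵥ EuclideanSpace.equiv (Fin k) ℝ x) ⬝ᵥ (EuclideanSpace.equiv (Fin l) ℝ y) := by
    rw [Matrix.mulVec_transpose, Matrix.dotProduct_mulVec]
  simp only [mulVecE, PiLp.inner_apply, RCLike.inner_apply, starRingEnd_apply, star_trivial]
  convert key using 1 <;> simp [dotProduct, mul_comm]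

noncomputable def mvCLM {k l : ℕ} (M : Matrix (Fin k) (Fin l) ℝ) :
    EuclideanSpace ℝ (Fin l) →L[ℝ] EuclideanSpace ℝ (Fin k) :=
  LinearMap.toContinuousLinearMap
    { toFun := mulVecE M
      map_add' := by intro a b; simp [mulVecE, Matrix.mulVec_add]
      map_smul' := by intro s a; simp [mulVecE, Matrix.mulVec_smul] }

lemma mvCLM_apply {k l : ℕ} (M : Matrix (Fin k) (Fin l) ℝ) (x) :
    mvCLM M x = mulVecE M x := rfl

lemma mulVecE_neg {k l : ℕ} (M : Matrix (Fin k) (Fin l) ℝ) (x) :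
    mulVecE (-M) x = -(mulVecE M x) := by
  simp [mulVecE, Matrix.neg_mulVec]

/-- **Theorem 1 (Network Passivity Index).** The RL microgrid network with
dynamics `L i̇ = −R i + W i + Cᵀ v`, input `v`, output `i_s = C i`, and zero
initial condition satisfies the OFP inequality with passivity index `r/c` on
every interval `[0, t]`. -/
theorem stmt_2 {m n : ℕ}
    (L R W : Matrix (Fin m) (Fin m) ℝ) (C : Matrix (Fin n) (Fin m) ℝ)
    (hLsymm : Lᵀ = L) (hLpsd : L.PosSemidef) (hW : Wᵀ = -W)
    (r c : ℝ) (hr : 0 < r) (hc : 0 < c)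
    (hR : ∀ x : EuclideanSpace ℝ (Fin m), r * ‖x‖ ^ 2 ≤ ⟪x, mulVecE R x⟫)
    (hC : ∀ x : EuclideanSpace ℝ (Fin m), ‖mulVecE C x‖ ^ 2 ≤ c * ‖x‖ ^ 2)
    (i : ℝ → EuclideanSpace ℝ (Fin m)) (v : ℝ → EuclideanSpace ℝ (Fin n))
    (hi : ContDiff ℝ 1 i) (hi0 : i 0 = 0) (hv : Continuous v)
    (hdyn : ∀ t : ℝ, mulVecE L (deriv i t) =
      -(mulVecE R (i t)) + mulVecE W (i t) + mulVecE Cᵀ (v t)) :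
    ∀ t : ℝ, 0 ≤ t →
      (∫ τ in (0:ℝ)..t, ⟪mulVecE C (i τ), v τ⟫) -
        (r / c) * ∫ τ in (0:ℝ)..t, ‖mulVecE C (i τ)‖ ^ 2 ≥ 0 := by
  intro t ht
  have hidiff : Differentiable ℝ i := hi.differentiable one_ne_zero
  have hicont : Continuous i := hidiff.continuous
  set F : ℝ → ℝ := fun τ => ⟪i τ, mulVecE L (i τ)⟫ with hF
  have hskew : ∀ x : EuclideanSpace ℝ (Fin m), ⟪x, mulVecE W x⟫ = 0 := by
    intro x
    have h := inner_mulVecE W x x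
    rw [hW, mulVecE_neg, inner_neg_left, real_inner_comm] at h
    rw [real_inner_comm]
    linarith
  have hFderiv : ∀ τ : ℝ, HasDerivAt F
      (2 * (-⟪i τ, mulVecE R (i τ)⟫ + ⟪mulVecE C (i τ), v τ⟫)) τ := by
    intro τ
    have hdi : HasDerivAt i (deriv i τ) τ := (hidiff τ).hasDerivAt
    have hLi : HasDerivAt (fun s => mulVecE L (i s)) (mulVecE L (deriv i τ)) τ :=
      ((mvCLM L).hasFDerivAt.comp_hasDerivAt τ hdi)
    have h := (hdi.inner ℝ hLi)
    have hsym : ⟪deriv i τ, mulVecE L (i τ)⟫ = ⟪i τ, mulVecE L (deriv i τ)⟫ := by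
      rw [real_inner_comm, inner_mulVecE, hLsymm, real_inner_comm]
    have hval : ⟪i τ, mulVecE L (deriv i τ)⟫ + ⟪deriv i τ, mulVecE L (i τ)⟫
        = 2 * (-⟪i τ, mulVecE R (i τ)⟫ + ⟪mulVecE C (i τ), v τ⟫) := by
      rw [hsym, hdyn τ]
      have h2 : ⟪i τ, -(mulVecE R (i τ)) + mulVecE W (i τ) + mulVecE Cᵀ (v τ)⟫
          = -⟪i τ, mulVecE R (i τ)⟫ + ⟪i τ, mulVecE W (i τ)⟫ + ⟪i τ, mulVecE Cᵀ (v τ)⟫ := by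
        simp [inner_add_right, inner_neg_right]
      have h3 : ⟪i τ, mulVecE Cᵀ (v τ)⟫ = ⟪mulVecE C (i τ), v τ⟫ := by
        rw [inner_mulVecE Cᵀ, Matrix.transpose_transpose]
      rw [h2, hskew, h3]
      ring
    rw [← hval]
    exact h
  -- continuity of integrands
  have hcont2 : Continuous fun τ => ⟪i τ, mulVecE R (i τ)⟫ :=
    hicont.inner ((mvCLM R).continuous.comp hicont)
  have hcont1 : Continuous fun τ => ⟪mulVecE C (i τ), v τ⟫ :=
    ((mvCLM C).continuous.comp hicont).inner hv
  have hcont3 : Continuous fun τ => ‖mulVecE C (i τ)‖ ^ 2 :=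
    (((mvCLM C).continuous.comp hicont).norm).pow 2
  have hconts : Continuous fun τ => 2 * (-⟪i τ, mulVecE R (i τ)⟫ + ⟪mulVecE C (i τ), v τ⟫) :=
    continuous_const.mul (hcont2.neg.add hcont1)
  -- FTC
  have hFTC : (∫ τ in (0:ℝ)..t, 2 * (-⟪i τ, mulVecE R (i τ)⟫ + ⟪mulVecE C (i τ), v τ⟫))
      = F t - F 0 :=
    intervalIntegral.integral_eq_sub_of_hasDerivAt (fun τ _ => hFderiv τ)
      (hconts.intervalIntegrable 0 t)
  have hF0 : F 0 = 0 := by simp [hF, hi0]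
  have hFt : 0 ≤ F t := by
    have h := hLpsd.dotProduct_mulVec_nonneg ((EuclideanSpace.equiv (Fin m) ℝ) (i t))
    simpa [hF, mulVecE, PiLp.inner_apply, dotProduct, mul_comm] using h
  -- split integrals
  have hint1 : IntervalIntegrable (fun τ => ⟪mulVecE C (i τ), v τ⟫) volume 0 t :=
    hcont1.intervalIntegrable 0 t
  have hint2 : IntervalIntegrable (fun τ => ⟪i τ, mulVecE R (i τ)⟫) volume 0 t :=
    hcont2.intervalIntegrable 0 t
  have hint3 : IntervalIntegrable (fun τ => (r/c) * ‖mulVecE C (i τ)‖ ^ 2) volume 0 t :=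
    (continuous_const.mul hcont3).intervalIntegrable 0 t
  have hsplit : (∫ τ in (0:ℝ)..t, 2 * (-⟪i τ, mulVecE R (i τ)⟫ + ⟪mulVecE C (i τ), v τ⟫))
      = 2 * (-(∫ τ in (0:ℝ)..t, ⟪i τ, mulVecE R (i τ)⟫)
          + ∫ τ in (0:ℝ)..t, ⟪mulVecE C (i τ), v τ⟫) := by
    rw [intervalIntegral.integral_const_mul]
    congr 1
    rw [intervalIntegral.integral_add (f := fun τ => -⟪i τ, mulVecE R (i τ)⟫) (hcont2.neg.intervalIntegrable 0 t) hint1,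
      intervalIntegral.integral_neg]
  have key1 : (∫ τ in (0:ℝ)..t, ⟪i τ, mulVecE R (i τ)⟫)
      ≤ ∫ τ in (0:ℝ)..t, ⟪mulVecE C (i τ), v τ⟫ := by
    have := hFTC
    rw [hsplit, hF0] at this
    linarith
  have key2 : (r/c) * (∫ τ in (0:ℝ)..t, ‖mulVecE C (i τ)‖ ^ 2)
      ≤ ∫ τ in (0:ℝ)..t, ⟪i τ, mulVecE R (i τ)⟫ := by
    rw [← intervalIntegral.integral_const_mul]
    apply intervalIntegral.integral_mono_on ht hint3 hint2
    intro τ _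
    have h1 : (r/c) * ‖mulVecE C (i τ)‖ ^ 2 ≤ (r/c) * (c * ‖i τ‖ ^ 2) :=
      mul_le_mul_of_nonneg_left (hC (i τ)) (le_of_lt (div_pos hr hc))
    have h2 : (r/c) * (c * ‖i τ‖ ^ 2) = r * ‖i τ‖ ^ 2 := by
      field_simp
    calc (r/c) * ‖mulVecE C (i τ)‖ ^ 2 ≤ r * ‖i τ‖ ^ 2 := by rw [← h2]; exact h1
      _ ≤ ⟪i τ, mulVecE R (i τ)⟫ := hR (i τ)
  linarith
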